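/- Let a ∈ Mₙ(F) be such that the F[X]-module V_a is not cyclic (the minimal polynomial of a is a proper divisor of the characteristic polynomial). Then there exists g ∈ GLₙ(F) with g a g⁻¹ = aᵀ and gᵀ ≠ g. -/

import Mathlib

open Polynomial Matrix DirectSum
namespace Stmt17Aux
variable {F : Type*} [Field F]

noncomputable def modCoeff (q : F[X]) : F[X] →ₗ[F] F where
  toFun f := (f %ₘ q).coeff (q.natDegree - 1)
  map_add' f g := by simp [Polynomial.add_modByMonic]
  map_smul' c f := by simp [Polynomial.smul_modByMonic]

noncomputable def qlift {W : Type*} [AddCommGroup W] [Module F W] (q : F[X])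
    (L : F[X] →ₗ[F] W) (h : ∀ f, L (f * q) = 0) :
    (F[X] ⧸ Submodule.span F[X] {q}) →ₗ[F] W :=
  (Submodule.liftQ ((Submodule.span F[X] {q}).restrictScalars F) L (by
      intro x hx
      rw [Submodule.restrictScalars_mem, Submodule.mem_span_singleton] at hx
      obtain ⟨c, rfl⟩ := hx
      simpa [smul_eq_mul] using h c)).comp
    (Submodule.Quotient.restrictScalarsEquiv F _).symm.toLinearMap

@[simp] lemma qlift_mk {W : Type*} [AddCommGroup W] [Module F W] (q : F[X])
    (L : F[X] →ₗ[F] W) (h : ∀ f, L (f * q) = 0) (f : F[X]) :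
    qlift q L h (Submodule.Quotient.mk f) = L f := rfl

noncomputable def Tf (q : F[X]) (hq : q.Monic) :
    (F[X] ⧸ Submodule.span F[X] {q}) →ₗ[F] F :=
  qlift q (modCoeff q) (fun f => by
    have h0 : (f * q) %ₘ q = 0 := by
      rw [Polynomial.modByMonic_eq_zero_iff_dvd hq]
      exact Dvd.intro_left f rfl
    simp [modCoeff, h0])

lemma Tf_mk (q : F[X]) (hq : q.Monic) (f : F[X]) :
    Tf q hq (Submodule.Quotient.mk f) = (f %ₘ q).coeff (q.natDegree - 1) := rfl

lemma mk_mul (q f g : F[X]) :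
    (Submodule.Quotient.mk f : F[X] ⧸ Submodule.span F[X] {q}) * Submodule.Quotient.mk g
      = Submodule.Quotient.mk (f * g) := rfl

lemma mk_eq_mk_of_mod (q f : F[X]) (hq : q.Monic) :
    (Submodule.Quotient.mk (f %ₘ q) : F[X] ⧸ Submodule.span F[X] {q})
      = Submodule.Quotient.mk f := by
  rw [Submodule.Quotient.eq, Submodule.mem_span_singleton]
  refine ⟨-(f /ₘ q), ?_⟩
  have h := Polynomial.modByMonic_add_div f q
  rw [smul_eq_mul]
  ring_nf
  linear_combination -h

lemma Tf_nondeg {q : F[X]} (hq : q.Monic) (u : F[X] ⧸ Submodule.span F[X] {q})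
    (hu : u ≠ 0) : ∃ v, Tf q hq (u * v) ≠ 0 := by
  obtain ⟨f, rfl⟩ := Submodule.Quotient.mk_surjective _ u
  set d := q.natDegree with hd
  set r := f %ₘ q with hr
  have hmkr : (Submodule.Quotient.mk r : F[X] ⧸ Submodule.span F[X] {q})
      = Submodule.Quotient.mk f := mk_eq_mk_of_mod q f hq
  have hrne : r ≠ 0 := by
    intro h0
    apply hu
    rw [← hmkr, h0, Submodule.Quotient.mk_zero]
  have hdr : r.degree < q.degree := Polynomial.degree_modByMonic_lt f hq
  have hdn : r.natDegree < d := Polynomial.natDegree_lt_natDegree hrne hdr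
  set c := r.leadingCoeff with hc
  have hcne : c ≠ 0 := Polynomial.leadingCoeff_ne_zero.mpr hrne
  set k := d - 1 - r.natDegree with hk
  refine ⟨Submodule.Quotient.mk (C c⁻¹ * X ^ k), ?_⟩
  rw [← hmkr, mk_mul]
  set w : F[X] := r * (C c⁻¹ * X ^ k) with hw
  have hwdeg : w.degree < q.degree := by
    have h1 : w.natDegree ≤ d - 1 := by
      calc w.natDegree ≤ r.natDegree + (C c⁻¹ * X ^ k).natDegree :=
            Polynomial.natDegree_mul_le
        _ ≤ r.natDegree + k := by
            have := Polynomial.natDegree_mul_le (p := (C c⁻¹ : F[X])) (q := X ^ k)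
            simp only [Polynomial.natDegree_C, Polynomial.natDegree_X_pow] at this ⊢
            omega
        _ ≤ d - 1 := by omega
    have h2 : w.degree ≤ (d - 1 : ℕ) :=
      le_trans (Polynomial.degree_le_natDegree) (by exact_mod_cast Nat.cast_le.mpr h1)
    refine lt_of_le_of_lt h2 ?_
    rw [Polynomial.degree_eq_natDegree hq.ne_zero, ← hd]
    exact_mod_cast Nat.sub_lt (by omega) one_pos
  have hmod : w %ₘ q = w := (Polynomial.modByMonic_eq_self_iff hq).mpr hwdeg
  have hcoeff : w.coeff (d - 1) = 1 := by
    have harr : w = (r * C c⁻¹) * X ^ k := by ring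
    have hidx : d - 1 = r.natDegree + k := by omega
    rw [harr, hidx, Polynomial.coeff_mul_X_pow, Polynomial.coeff_mul_C]
    rw [← Polynomial.leadingCoeff, ← hc]
    exact mul_inv_cancel₀ hcne
  rw [Tf_mk, hmod, hcoeff]
  exact one_ne_zero

lemma Xsmul_mul (q : F[X]) (u v : F[X] ⧸ Submodule.span F[X] {q}) :
    ((X : F[X]) • u) * v = u * ((X : F[X]) • v) := by
  obtain ⟨f, rfl⟩ := Submodule.Quotient.mk_surjective _ u
  obtain ⟨g, rfl⟩ := Submodule.Quotient.mk_surjective _ v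
  rw [← Submodule.Quotient.mk_smul, ← Submodule.Quotient.mk_smul, mk_mul, mk_mul]
  congr 1
  simp only [smul_eq_mul]
  ring

lemma smul_mul_left (q : F[X]) (c : F) (u v : F[X] ⧸ Submodule.span F[X] {q}) :
    (c • u) * v = c • (u * v) := by
  obtain ⟨f, rfl⟩ := Submodule.Quotient.mk_surjective _ u
  obtain ⟨g, rfl⟩ := Submodule.Quotient.mk_surjective _ v
  rw [← Submodule.Quotient.mk_smul, mk_mul, mk_mul, ← Submodule.Quotient.mk_smul]
  congr 1
  exact smul_mul_assoc c f g

lemma smul_mul_right (q : F[X]) (c : F) (u v : F[X] ⧸ Submodule.span F[X] {q}) :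
    u * (c • v) = c • (u * v) := by
  obtain ⟨f, rfl⟩ := Submodule.Quotient.mk_surjective _ u
  obtain ⟨g, rfl⟩ := Submodule.Quotient.mk_surjective _ v
  rw [← Submodule.Quotient.mk_smul, mk_mul, mk_mul, ← Submodule.Quotient.mk_smul]
  congr 1
  exact mul_smul_comm c f g

noncomputable def phi (qi qj c : F[X]) (hc : ∃ b, qj * c = b * qi) :
    (F[X] ⧸ Submodule.span F[X] {qj}) →ₗ[F] (F[X] ⧸ Submodule.span F[X] {qi}) :=
  qlift qj ((((Submodule.span F[X] {qi}).mkQ).restrictScalars F).comp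
    (LinearMap.mulRight F c)) (by
      intro f
      obtain ⟨b, hb⟩ := hc
      simp only [LinearMap.comp_apply, LinearMap.mulRight_apply,
        LinearMap.coe_restrictScalars, Submodule.mkQ_apply]
      rw [Submodule.Quotient.mk_eq_zero, Submodule.mem_span_singleton]
      refine ⟨f * b, ?_⟩
      rw [smul_eq_mul]
      linear_combination (-f) * hb)

lemma phi_mk (qi qj c : F[X]) (hc : ∃ b, qj * c = b * qi) (f : F[X]) :
    phi qi qj c hc (Submodule.Quotient.mk f) = Submodule.Quotient.mk (f * c) := rfl

lemma phi_Xsmul (qi qj c : F[X]) (hc : ∃ b, qj * c = b * qi)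
    (v : F[X] ⧸ Submodule.span F[X] {qj}) :
    phi qi qj c hc ((X : F[X]) • v) = (X : F[X]) • phi qi qj c hc v := by
  obtain ⟨g, rfl⟩ := Submodule.Quotient.mk_surjective _ v
  rw [← Submodule.Quotient.mk_smul, phi_mk, phi_mk, ← Submodule.Quotient.mk_smul]
  congr 1
  simp [smul_eq_mul, mul_assoc]


section Bform
variable {ι : Type*} [Fintype ι] [DecidableEq ι]

noncomputable def Bform (q : ι → F[X]) (L : ∀ i, (F[X] ⧸ Submodule.span F[X] {q i}) →ₗ[F] F)
    (i₀ j₀ : ι)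
    (φm : (F[X] ⧸ Submodule.span F[X] {q j₀}) →ₗ[F] (F[X] ⧸ Submodule.span F[X] {q i₀})) :
    (⨁ i, F[X] ⧸ Submodule.span F[X] {q i}) →ₗ[F]
      (⨁ i, F[X] ⧸ Submodule.span F[X] {q i}) →ₗ[F] F :=
  LinearMap.mk₂ F
    (fun s t => (∑ i, L i (s i * t i)) + L i₀ (s i₀ * φm (t j₀)))
    (by
      intro s1 s2 t
      have h : ∀ i, (s1 + s2) i = s1 i + s2 i := fun i => DFinsupp.add_apply s1 s2 i
      simp only [h, add_mul, _root_.map_add, Finset.sum_add_distrib]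
      abel)
    (by
      intro c s t
      have h : ∀ i, (c • s) i = c • s i := fun i => DFinsupp.smul_apply c s i
      simp only [h, smul_mul_left, _root_.map_smul, smul_eq_mul, mul_add, Finset.mul_sum])
    (by
      intro s t1 t2
      have h : ∀ i, (t1 + t2) i = t1 i + t2 i := fun i => DFinsupp.add_apply t1 t2 i
      simp only [h, mul_add, _root_.map_add, Finset.sum_add_distrib]
      abel)
    (by
      intro c s t
      have h : ∀ i, (c • t) i = c • t i := fun i => DFinsupp.smul_apply c t i
      simp only [h, smul_mul_right, _root_.map_smul, smul_eq_mul, mul_add, Finset.mul_sum])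

lemma Bform_apply (q : ι → F[X]) (L : ∀ i, (F[X] ⧸ Submodule.span F[X] {q i}) →ₗ[F] F)
    (i₀ j₀ : ι)
    (φm : (F[X] ⧸ Submodule.span F[X] {q j₀}) →ₗ[F] (F[X] ⧸ Submodule.span F[X] {q i₀}))
    (s t : ⨁ i, F[X] ⧸ Submodule.span F[X] {q i}) :
    Bform q L i₀ j₀ φm s t
      = (∑ i, L i (s i * t i)) + L i₀ (s i₀ * φm (t j₀)) := rfl

end Bform

end Stmt17Aux

open Stmt17Aux DirectSum

set_option maxHeartbeats 1000000 in
/-- If `V_a = Fⁿ` (with `X` acting by `a`) is not a cyclic `F[X]`-module, then there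
is `g ∈ GLₙ(F)` with `g a g⁻¹ = aᵀ` and `gᵀ ≠ g`. -/
theorem stmt17 {F : Type*} [Field F] {n : ℕ} (a : Matrix (Fin n) (Fin n) F)
    (hncyc : ¬ ∃ v : Fin n → F, ∀ w : Fin n → F,
      ∃ p : F[X], (Polynomial.aeval a p).mulVec v = w) :
    ∃ g : GL (Fin n) F,
      (g : Matrix (Fin n) (Fin n) F) * a
          * ((g⁻¹ : GL (Fin n) F) : Matrix (Fin n) (Fin n) F) = aᵀ ∧
      (g : Matrix (Fin n) (Fin n) F)ᵀ ≠ (g : Matrix (Fin n) (Fin n) F) := by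
  classical
  set φa : (Fin n → F) →ₗ[F] (Fin n → F) := Matrix.toLinAlgEquiv' a with hφadef
  have hφa_apply : ∀ x, φa x = a *ᵥ x := fun x => Matrix.toLinAlgEquiv'_apply a x
  have haev : ∀ (f : F[X]), Polynomial.aeval φa f
      = Matrix.toLinAlgEquiv' (Polynomial.aeval a f) := by
    intro f
    rw [hφadef]
    exact Polynomial.aeval_algHom_apply (Matrix.toLinAlgEquiv' (R := F) (n := Fin n)) a f
  have tors : Module.IsTorsion F[X] (Module.AEval' φa) := by
    intro x
    refine ⟨⟨a.charpoly, mem_nonZeroDivisors_of_ne_zero a.charpoly_monic.ne_zero⟩, ?_⟩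
    obtain ⟨m, rfl⟩ := (Module.AEval'.of φa).surjective x
    rw [Submonoid.smul_def, ← Module.AEval.of_aeval_smul]
    have h0 : Polynomial.aeval φa a.charpoly = 0 := by
      rw [haev, Matrix.aeval_self_charpoly]
      simp
    rw [h0]
    simp
  obtain ⟨ι, hfin, p, hp, e, ⟨l⟩⟩ :=
    Module.equiv_directSum_of_isTorsion (R := F[X]) (M := Module.AEval' φa) tors
  haveI := hfin
  set q : ι → F[X] := fun i => normalize (p i ^ e i) with hqdef
  have hq0 : ∀ i, p i ^ e i ≠ 0 := fun i => pow_ne_zero _ (hp i).ne_zero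
  have hqm : ∀ i, (q i).Monic := fun i => Polynomial.monic_normalize (hq0 i)
  have hspan : ∀ i, (F[X] ∙ p i ^ e i) = Submodule.span F[X] {q i} := by
    intro i
    show Ideal.span {p i ^ e i} = Ideal.span {q i}
    rw [Ideal.span_singleton_eq_span_singleton]
    exact (normalize_associated _).symm
  let l2 : (⨁ i, F[X] ⧸ (F[X] ∙ p i ^ e i)) ≃ₗ[F[X]]
      (⨁ i, F[X] ⧸ Submodule.span F[X] {q i}) :=
    DFinsupp.mapRange.linearEquiv (fun i => Submodule.quotEquivOfEq _ _ (hspan i))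
  set E := l.trans l2 with hEdef
  -- non-coprime pair exists, otherwise the module is cyclic
  have key : ∃ i j : ι, i ≠ j ∧ ¬ IsCoprime (q i) (q j) := by
    by_contra hco
    push_neg at hco
    apply hncyc
    set oneD : ⨁ i, F[X] ⧸ Submodule.span F[X] {q i} :=
      ∑ i, DirectSum.of (fun i => F[X] ⧸ Submodule.span F[X] {q i}) i
        (Submodule.Quotient.mk 1) with honeD
    have honeD_apply : ∀ i, oneD i = Submodule.Quotient.mk 1 := by
      intro i
      rw [honeD, DFinsupp.finset_sum_apply]
      rw [Finset.sum_eq_single i]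
      · exact DirectSum.of_eq_same i _
      · intro b _ hb
        exact DirectSum.of_eq_of_ne _ _ _ (Ne.symm hb)
      · intro h
        exact absurd (Finset.mem_univ i) h
    refine ⟨(Module.AEval'.of φa).symm (E.symm oneD), fun w => ?_⟩
    set t := E (Module.AEval'.of φa w) with ht
    choose r hr using fun i => Submodule.Quotient.mk_surjective _ (t i)
    have hpair : Pairwise (Function.onFun IsCoprime fun i => Ideal.span {q i}) := by
      intro i j hij
      exact (Ideal.isCoprime_span_singleton_iff _ _).mpr (hco i j hij)
    obtain ⟨z, hz⟩ := Ideal.quotientInfToPiQuotient_surj hpair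
      (fun i => Ideal.Quotient.mk (Ideal.span {q i}) (r i))
    obtain ⟨f, rfl⟩ := Ideal.Quotient.mk_surjective z
    have hf : ∀ i, Ideal.Quotient.mk (Ideal.span {q i}) f
        = Ideal.Quotient.mk (Ideal.span {q i}) (r i) := by
      intro i
      have h2 := congrFun hz i
      rwa [Ideal.quotientInfToPiQuotient_mk'] at h2
    refine ⟨f, ?_⟩
    have hsmul : f • (E.symm oneD) = Module.AEval'.of φa w := by
      apply E.injective
      rw [_root_.map_smul, LinearEquiv.apply_symm_apply, ← ht]
      refine DFinsupp.ext fun i => ?_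
      rw [DFinsupp.smul_apply, honeD_apply, ← hr i, ← Submodule.Quotient.mk_smul]
      have h1 : f • (1 : F[X]) = f := by simp
      rw [h1]
      exact hf i
    have h3 : Polynomial.aeval φa f • ((Module.AEval'.of φa).symm (E.symm oneD)) = w := by
      have h4 := congrArg (Module.AEval'.of φa).symm hsmul
      rwa [Module.AEval.of_symm_smul, LinearEquiv.symm_apply_apply] at h4
    rw [haev] at h3
    rw [Module.End.smul_def, Matrix.toLinAlgEquiv'_apply] at h3
    exact h3
  obtain ⟨i₀, j₀, hij, hncop⟩ := key
  -- the intertwiner data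
  set G := EuclideanDomain.gcd (q i₀) (q j₀) with hGdef
  obtain ⟨ci, hci⟩ := EuclideanDomain.gcd_dvd_left (q i₀) (q j₀)
  obtain ⟨cj, hcj⟩ := EuclideanDomain.gcd_dvd_right (q i₀) (q j₀)
  have hG0 : G ≠ 0 := by
    intro h0
    rw [hGdef, EuclideanDomain.gcd_eq_zero_iff] at h0
    exact (hqm i₀).ne_zero h0.1
  have hGu : ¬ IsUnit G := fun h => hncop (EuclideanDomain.gcd_isUnit_iff.mp h)
  have hGdeg : 1 ≤ G.natDegree := by
    by_contra h
    push_neg at h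
    have h0 : G.natDegree = 0 := by omega
    obtain ⟨x, hx⟩ := Polynomial.natDegree_eq_zero.mp h0
    apply hGu
    rw [← hx]
    refine Polynomial.isUnit_C.mpr (isUnit_iff_ne_zero.mpr ?_)
    rintro rfl
    rw [map_zero] at hx
    exact hG0 hx.symm
  have hci0 : ci ≠ 0 := by
    rintro rfl
    rw [mul_zero] at hci
    exact (hqm i₀).ne_zero hci
  have hcb : ∃ b, (q j₀) * ci = b * (q i₀) := ⟨cj, by linear_combination ci * hcj - cj * hci⟩
  set φm := phi (q i₀) (q j₀) ci hcb with hφm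
  have hcine : (Submodule.Quotient.mk ci : F[X] ⧸ Submodule.span F[X] {q i₀}) ≠ 0 := by
    intro h0
    have hmem : ci ∈ Submodule.span F[X] {q i₀} :=
      (Submodule.Quotient.mk_eq_zero _).mp h0
    rw [Submodule.mem_span_singleton] at hmem
    obtain ⟨b, hb⟩ := hmem
    have hdvd : q i₀ ∣ ci := ⟨b, by rw [← hb, smul_eq_mul, mul_comm]⟩
    have h1 := Polynomial.natDegree_le_of_dvd hdvd hci0
    have h2 : (q i₀).natDegree = G.natDegree + ci.natDegree := by
      rw [hci]
      exact Polynomial.natDegree_mul hG0 hci0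
    omega
  set Efun : (Fin n → F) ≃ₗ[F] (⨁ i, F[X] ⧸ Submodule.span F[X] {q i}) :=
    (Module.AEval'.of φa).trans (E.restrictScalars F) with hEfun
  have hEX : ∀ x : Fin n → F, Efun (a *ᵥ x) = (X : F[X]) • Efun x := by
    intro x
    show E ((Module.AEval'.of φa) (a *ᵥ x)) = (X : F[X]) • E (Module.AEval'.of φa x)
    rw [← hφa_apply, ← Module.AEval'.X_smul_of, _root_.map_smul]
  -- the bilinear form
  set β : (Fin n → F) →ₗ[F] (Fin n → F) →ₗ[F] F :=
    LinearMap.compl₁₂ (Bform q (fun i => Tf (q i) (hqm i)) i₀ j₀ φm)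
      Efun.toLinearMap Efun.toLinearMap with hβdef
  have hβ_apply : ∀ x y, β x y
      = (∑ i, Tf (q i) (hqm i) ((Efun x) i * (Efun y) i))
        + Tf (q i₀) (hqm i₀) ((Efun x) i₀ * φm ((Efun y) j₀)) := by
    intro x y
    rw [hβdef, LinearMap.compl₁₂_apply, Bform_apply]
    rfl
  set g : Matrix (Fin n) (Fin n) F := LinearMap.toMatrix₂' F β with hgdef
  have hβg : ∀ x y, β x y = x ⬝ᵥ g *ᵥ y := by
    intro x y
    rw [← Matrix.toLinearMap₂'_apply' (T := F) g x y, hgdef,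
      Matrix.toLinearMap₂'_toMatrix']
  -- balanced
  have hbal : ∀ x y, β (a *ᵥ x) y = β x (a *ᵥ y) := by
    intro x y
    rw [hβ_apply, hβ_apply, hEX, hEX]
    have hs : ∀ (t : ⨁ i, F[X] ⧸ Submodule.span F[X] {q i}) (i : ι),
        ((X : F[X]) • t) i = (X : F[X]) • t i := fun t i => DFinsupp.smul_apply _ t i
    simp only [hs]
    rw [phi_Xsmul]
    congr 1
    · exact Finset.sum_congr rfl fun i _ => by rw [Xsmul_mul]
    · rw [Xsmul_mul]
  -- intertwining: aᵀ * g = g * a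
  have hint : aᵀ * g = g * a := by
    ext i j
    have h := hbal (Pi.single i 1) (Pi.single j 1)
    rw [hβg, hβg] at h
    simpa [Matrix.mulVec_single, Matrix.mul_apply, Matrix.mulVec, dotProduct,
      Pi.single_apply, Finset.sum_ite_eq, Finset.sum_ite_eq', Matrix.transpose_apply,
      mul_comm] using h
  -- nondegeneracy
  have hker : ∀ y, g *ᵥ y = 0 → y = 0 := by
    intro y hy
    have hall : ∀ x, β x y = 0 := by
      intro x
      rw [hβg, hy, dotProduct_zero]
    set t := Efun y with htdef
    have hne : ∀ k, k ≠ i₀ → t k = 0 := by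
      intro k hk
      by_contra htk
      obtain ⟨v, hv⟩ := Tf_nondeg (hqm k) (t k) htk
      have h := hall (Efun.symm (DirectSum.of _ k v))
      rw [hβ_apply, LinearEquiv.apply_symm_apply] at h
      rw [Finset.sum_eq_single k] at h
      · rw [DirectSum.of_eq_same, DirectSum.of_eq_of_ne _ _ _ (Ne.symm hk)] at h
        rw [zero_mul, map_zero, add_zero] at h
        exact hv (by rwa [mul_comm] at h)
      · intro b _ hb
        rw [DirectSum.of_eq_of_ne _ _ _ hb, zero_mul, map_zero]
      · simp
    have hi₀ : t i₀ = 0 := by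
      by_contra hti
      obtain ⟨v, hv⟩ := Tf_nondeg (hqm i₀) (t i₀) hti
      have h := hall (Efun.symm (DirectSum.of _ i₀ v))
      rw [hβ_apply, LinearEquiv.apply_symm_apply] at h
      rw [Finset.sum_eq_single i₀] at h
      · rw [DirectSum.of_eq_same, hne j₀ (Ne.symm hij), map_zero, mul_zero,
          map_zero, add_zero] at h
        exact hv (by rwa [mul_comm] at h)
      · intro b _ hb
        rw [DirectSum.of_eq_of_ne _ _ _ hb, zero_mul, map_zero]
      · simp
    have ht0 : t = 0 := by
      refine DFinsupp.ext fun k => ?_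
      by_cases hk : k = i₀
      · rw [hk, hi₀]; rfl
      · rw [hne k hk]; rfl
    have := congrArg Efun.symm ht0
    rwa [htdef, LinearEquiv.symm_apply_apply, map_zero] at this
  have hdet : g.det ≠ 0 := by
    intro h0
    obtain ⟨y, hy0, hy⟩ := (Matrix.exists_mulVec_eq_zero_iff).mpr h0
    exact hy0 (hker y hy)
  have hU : IsUnit g := (Matrix.isUnit_iff_isUnit_det g).mpr (isUnit_iff_ne_zero.mpr hdet)
  refine ⟨hU.unit, ?_, ?_⟩
  · have hcoe : (hU.unit : Matrix (Fin n) (Fin n) F) = g := rfl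
    have hinv : g * ((hU.unit⁻¹ : GL (Fin n) F) : Matrix (Fin n) (Fin n) F) = 1 :=
      hU.unit.mul_inv
    calc (hU.unit : Matrix (Fin n) (Fin n) F) * a
          * ((hU.unit⁻¹ : GL (Fin n) F) : Matrix (Fin n) (Fin n) F)
        = g * a * ((hU.unit⁻¹ : GL (Fin n) F) : Matrix (Fin n) (Fin n) F) := by rw [hcoe]
      _ = aᵀ * g * ((hU.unit⁻¹ : GL (Fin n) F) : Matrix (Fin n) (Fin n) F) := by rw [hint]
      _ = aᵀ * (g * ((hU.unit⁻¹ : GL (Fin n) F) : Matrix (Fin n) (Fin n) F)) := by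
          rw [Matrix.mul_assoc]
      _ = aᵀ := by rw [hinv, Matrix.mul_one]
  · -- non-symmetry
    intro hsym
    obtain ⟨v0, hv0⟩ := Tf_nondeg (hqm i₀) (Submodule.Quotient.mk ci) hcine
    set x := Efun.symm (DirectSum.of _ i₀ v0) with hx
    set y := Efun.symm (DirectSum.of _ j₀ (Submodule.Quotient.mk 1)) with hy
    have hxy : β x y = Tf (q i₀) (hqm i₀) (v0 * Submodule.Quotient.mk ci) := by
      rw [hβ_apply, hx, hy, LinearEquiv.apply_symm_apply, LinearEquiv.apply_symm_apply]
      rw [Finset.sum_eq_zero]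
      · rw [DirectSum.of_eq_same, DirectSum.of_eq_same, zero_add, hφm, phi_mk, one_mul]
      · intro i _
        by_cases h1 : i = i₀
        · subst h1
          rw [DirectSum.of_eq_of_ne _ _ _ hij, mul_zero, map_zero]
        · rw [DirectSum.of_eq_of_ne _ _ _ h1, zero_mul, map_zero]
    have hyx : β y x = 0 := by
      rw [hβ_apply, hx, hy, LinearEquiv.apply_symm_apply, LinearEquiv.apply_symm_apply]
      rw [Finset.sum_eq_zero]
      · rw [DirectSum.of_eq_of_ne _ _ _ hij, zero_mul, map_zero, zero_add]
      · intro i _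
        by_cases h1 : i = j₀
        · subst h1
          rw [DirectSum.of_eq_of_ne _ _ _ (Ne.symm hij), mul_zero, map_zero]
        · rw [DirectSum.of_eq_of_ne _ _ _ h1, zero_mul, map_zero]
    have hne0 : β x y ≠ 0 := by
      rw [hxy]
      rwa [mul_comm] at hv0
    apply hne0
    have hsym' : gᵀ = g := hsym
    rw [hβg, Matrix.dotProduct_mulVec, ← hsym', Matrix.vecMul_transpose,
      dotProduct_comm, ← hβg y x]
    exact hyx
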